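/- (Euclidean Weingarten equation, explicit form) Let U ⊆ ℂ be open and a, μ : U → ℂ holomorphic with μ(w) ≠ 0 for all w ∈ U. Define the normal Gauss map ν : U → ℝ⁴ by ν = (1/(1+|a|²))·(0, a+conj(a), −i(a−conj(a)), −1+|a|²) (a real unit vector, with values in the sphere S²), and set ξ = a'/(conj(μ)(1+|a|²)²). Then ν_w = ξ·conj(μ·W(a,−a)) holds componentwise on U, where W(a,−a) = (0, 1−a², i(1+a²), 2a), and |ξ|² = |a'|²/(|μ|²(1+|a|²)⁴) = −K, where K = −(1/λ²)Δ ln λ is the Gauss curvature of the induced metric with λ² = 4|μ|²(1+|a|²)²; in particular K = −|a'|²/(|μ|²(1+|a|²)⁴) ≤ 0. -/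

import Mathlib

open Complex ComplexConjugate

/-- The Weierstrass vector `W(a,b) = (a+b, 1+ab, i(1-ab), a-b) ∈ ℂ⁴`. -/
noncomputable def W (a b : ℂ) : Fin 4 → ℂ := ![a + b, 1 + a * b, I * (1 - a * b), a - b]

/-- The Wirtinger derivative `g_w = (1/2)(g_u − i g_v)` of a map `g : ℂ → E`. -/
noncomputable def wd {E : Type*} [NormedAddCommGroup E] [NormedSpace ℂ E]
    (g : ℂ → E) (w : ℂ) : E :=
  (2⁻¹ : ℂ) • (fderiv ℝ g w 1 - Complex.I • fderiv ℝ g w Complex.I)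

/-- The Euclidean Laplacian `Δf = f_uu + f_vv` of `f : ℂ → ℝ`, `w = u + iv`. -/
noncomputable def lap (f : ℂ → ℝ) (w : ℂ) : ℝ :=
  fderiv ℝ (fun z => fderiv ℝ f z 1) w 1 +
    fderiv ℝ (fun z => fderiv ℝ f z Complex.I) w Complex.I

/-- The real-linear map `v ↦ P v + Q conj v`. -/
noncomputable def lm (P Q : ℂ) : ℂ →L[ℝ] ℂ :=
  P • (ContinuousLinearMap.id ℂ ℂ).restrictScalars ℝ +
  Q • (Complex.conjCLE.toContinuousLinearMap : ℂ →L[ℝ] ℂ)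

lemma lm_apply (P Q v : ℂ) : lm P Q v = P * v + Q * conj v := by
  simp [lm, Complex.conjCLE_apply, smul_eq_mul]

lemma LM.congr {f : ℂ → ℂ} {P Q P' Q' : ℂ} {z : ℂ}
    (h : HasFDerivAt f (lm P Q) z) (hP : P = P') (hQ : Q = Q') :
    HasFDerivAt f (lm P' Q') z := hP ▸ hQ ▸ h

lemma LM.holo {f : ℂ → ℂ} {z : ℂ} (h : DifferentiableAt ℂ f z) :
    HasFDerivAt f (lm (deriv f z) 0) z := by
  have h1 := (h.hasFDerivAt).restrictScalars ℝ
  refine h1.congr_fderiv ?_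
  ext v
  simp only [lm_apply, ContinuousLinearMap.coe_restrictScalars', zero_mul, add_zero]
  have : fderiv ℂ f z v = v • fderiv ℂ f z 1 := by
    rw [← map_smul, smul_eq_mul, mul_one]
  rw [this, smul_eq_mul, ← deriv, mul_comm]

lemma LM.const (c : ℂ) (z : ℂ) : HasFDerivAt (fun _ => c) (lm 0 0) z := by
  have : lm 0 0 = (0 : ℂ →L[ℝ] ℂ) := by ext v; simp [lm_apply]
  rw [this]; exact hasFDerivAt_const c z

lemma LM.add {f g : ℂ → ℂ} {P Q R S : ℂ} {z : ℂ}
    (hf : HasFDerivAt f (lm P Q) z) (hg : HasFDerivAt g (lm R S) z) :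
    HasFDerivAt (fun w => f w + g w) (lm (P + R) (Q + S)) z := by
  have := hf.add hg
  refine this.congr_fderiv ?_
  ext v; simp [lm_apply]; ring

lemma LM.sub {f g : ℂ → ℂ} {P Q R S : ℂ} {z : ℂ}
    (hf : HasFDerivAt f (lm P Q) z) (hg : HasFDerivAt g (lm R S) z) :
    HasFDerivAt (fun w => f w - g w) (lm (P - R) (Q - S)) z := by
  have := hf.sub hg
  refine this.congr_fderiv ?_
  ext v; simp [lm_apply]; ring

lemma LM.conj {f : ℂ → ℂ} {P Q : ℂ} {z : ℂ} (hf : HasFDerivAt f (lm P Q) z) :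
    HasFDerivAt (fun w => conj (f w)) (lm (conj Q) (conj P)) z := by
  have h1 : HasFDerivAt (fun w : ℂ => (Complex.conjCLE.toContinuousLinearMap : ℂ →L[ℝ] ℂ) (f w))
      ((Complex.conjCLE.toContinuousLinearMap : ℂ →L[ℝ] ℂ).comp (lm P Q)) z :=
    (Complex.conjCLE.toContinuousLinearMap.hasFDerivAt).comp z hf
  have h2 : (Complex.conjCLE.toContinuousLinearMap : ℂ →L[ℝ] ℂ).comp (lm P Q)
      = lm (conj Q) (conj P) := by
    ext v; simp [lm_apply, Complex.conjCLE_apply, map_add, map_mul]; ring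
  rw [h2] at h1
  simpa using h1

lemma LM.mul {f g : ℂ → ℂ} {P Q R S : ℂ} {z : ℂ}
    (hf : HasFDerivAt f (lm P Q) z) (hg : HasFDerivAt g (lm R S) z) :
    HasFDerivAt (fun w => f w * g w)
      (lm (P * g z + f z * R) (Q * g z + f z * S)) z := by
  have := hf.mul hg
  refine this.congr_fderiv ?_
  ext v; simp [lm_apply, smul_eq_mul]; ring

lemma LM.comp_holo {f g : ℂ → ℂ} {P Q g' : ℂ} {z : ℂ}
    (hg : HasDerivAt g g' (f z)) (hf : HasFDerivAt f (lm P Q) z) :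
    HasFDerivAt (fun w => g (f w)) (lm (g' * P) (g' * Q)) z := by
  have h1 := (hg.hasFDerivAt.restrictScalars ℝ).comp z hf
  refine h1.congr_fderiv ?_
  ext v
  simp [lm_apply, smul_eq_mul]
  ring

lemma LM.inv {f : ℂ → ℂ} {P Q : ℂ} {z : ℂ}
    (hf : HasFDerivAt f (lm P Q) z) (h0 : f z ≠ 0) :
    HasFDerivAt (fun w => (f w)⁻¹) (lm (-(P / f z ^ 2)) (-(Q / f z ^ 2))) z := by
  have hg : HasDerivAt (fun y : ℂ => y⁻¹) (-(f z ^ 2)⁻¹) (f z) := hasDerivAt_inv h0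
  have := LM.comp_holo hg hf
  exact LM.congr this (by field_simp) (by field_simp)

lemma LM.div {f g : ℂ → ℂ} {P Q R S : ℂ} {z : ℂ}
    (hf : HasFDerivAt f (lm P Q) z) (hg : HasFDerivAt g (lm R S) z) (h0 : g z ≠ 0) :
    HasFDerivAt (fun w => f w / g w)
      (lm ((P * g z - f z * R) / g z ^ 2) ((Q * g z - f z * S) / g z ^ 2)) z := by
  have h1 := LM.mul hf (LM.inv hg h0)
  have h2 : HasFDerivAt (fun w => f w / g w)
      (lm (P * (g z)⁻¹ + f z * -(R / g z ^ 2)) (Q * (g z)⁻¹ + f z * -(S / g z ^ 2))) z := by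
    simpa only [div_eq_mul_inv] using h1
  exact LM.congr h2 (by field_simp; ring) (by field_simp; ring)

lemma LM.clog {f : ℂ → ℂ} {P Q : ℂ} {z : ℂ}
    (hf : HasFDerivAt f (lm P Q) z) (h0 : f z ∈ Complex.slitPlane) :
    HasFDerivAt (fun w => Complex.log (f w)) (lm (P / f z) (Q / f z)) z := by
  have := LM.comp_holo (Complex.hasDerivAt_log h0) hf
  exact LM.congr this (by rw [div_eq_inv_mul]) (by rw [div_eq_inv_mul])

lemma wd_eq {f : ℂ → ℂ} {P Q : ℂ} {z : ℂ} (h : HasFDerivAt f (lm P Q) z) :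
    wd f z = P := by
  rw [wd, h.fderiv]
  simp only [lm_apply, map_one, Complex.conj_I, smul_eq_mul, mul_one]
  ring_nf
  rw [Complex.I_sq]
  ring

lemma wd_pi {ν : ℂ → Fin 4 → ℂ} {w : ℂ}
    (h : ∀ i, DifferentiableAt ℝ (fun z => ν z i) w) (i : Fin 4) :
    wd ν w i = wd (fun z => ν z i) w := by
  rw [wd, wd]
  rw [fderiv_pi h]
  simp [ContinuousLinearMap.pi_apply]

lemma lap_master {f : ℂ → ℝ} {F P Q : ℂ → ℂ} {Pp Pq Qp Qq : ℂ} {w : ℂ}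
    (hfF : ∀ z, f z = (F z).re)
    (hF : ∀ᶠ z in nhds w, HasFDerivAt F (lm (P z) (Q z)) z)
    (hP : HasFDerivAt P (lm Pp Pq) w) (hQ : HasFDerivAt Q (lm Qp Qq) w) :
    lap f w = (2 * (Pq + Qp)).re := by
  have h1 : ∀ᶠ z in nhds w, HasFDerivAt f (Complex.reCLM.comp (lm (P z) (Q z))) z := by
    filter_upwards [hF] with z hz
    have : HasFDerivAt (fun y => (F y).re) (Complex.reCLM.comp (lm (P z) (Q z))) z :=
      (Complex.reCLM.hasFDerivAt).comp z hz
    exact this.congr_of_eventuallyEq (Filter.Eventually.of_forall fun y => hfF y)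
  have hd1 : (fun z => fderiv ℝ f z 1) =ᶠ[nhds w] fun z => (P z + Q z).re := by
    filter_upwards [h1] with z hz
    rw [hz.fderiv]
    simp [lm_apply]
  have hdI : (fun z => fderiv ℝ f z Complex.I) =ᶠ[nhds w]
      fun z => ((P z - Q z) * Complex.I).re := by
    filter_upwards [h1] with z hz
    rw [hz.fderiv]
    simp only [ContinuousLinearMap.comp_apply, lm_apply, Complex.conj_I, Complex.reCLM_apply]
    ring_nf
  have e1 : fderiv ℝ (fun z => fderiv ℝ f z 1) w = fderiv ℝ (fun z => (P z + Q z).re) w :=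
    hd1.fderiv_eq
  have eI : fderiv ℝ (fun z => fderiv ℝ f z Complex.I) w
      = fderiv ℝ (fun z => ((P z - Q z) * Complex.I).re) w := hdI.fderiv_eq
  have hsum : HasFDerivAt (fun z => (P z + Q z).re)
      (Complex.reCLM.comp (lm (Pp + Qp) (Pq + Qq))) w :=
    (Complex.reCLM.hasFDerivAt).comp w (LM.add hP hQ)
  have hmulI : HasFDerivAt (fun z => (P z - Q z) * Complex.I)
      (lm ((Pp - Qp) * Complex.I) ((Pq - Qq) * Complex.I)) w := by
    have := LM.mul (LM.sub hP hQ) (LM.const Complex.I w)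
    simp only [mul_zero, add_zero] at this
    exact this
  have hI2 : HasFDerivAt (fun z => ((P z - Q z) * Complex.I).re)
      (Complex.reCLM.comp (lm ((Pp - Qp) * Complex.I) ((Pq - Qq) * Complex.I))) w :=
    (Complex.reCLM.hasFDerivAt).comp w hmulI
  rw [lap, e1, eI, hsum.fderiv, hI2.fderiv]
  simp only [ContinuousLinearMap.comp_apply, lm_apply, map_one, Complex.conj_I, mul_one,
    Complex.reCLM_apply]
  rw [← Complex.add_re]
  congr 1
  ring_nf
  rw [Complex.I_sq]
  ring

lemma habs2 (x : ℂ) : ((‖x‖ : ℂ)) ^ 2 = x * conj x := by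
  rw [← Complex.ofReal_pow, Complex.sq_norm, Complex.mul_conj]

lemma hrc (x : ℂ) : (1 : ℂ) + x * conj x = ((1 + ‖x‖ ^ 2 : ℝ) : ℂ) := by
  rw [← habs2]; push_cast; ring

lemma hrne (x : ℂ) : (1 : ℂ) + x * conj x ≠ 0 := by
  rw [hrc]
  exact_mod_cast (by positivity : (1 + ‖x‖ ^ 2 : ℝ) ≠ 0)

lemma hrne' (x : ℂ) : (1 : ℂ) + conj x * x ≠ 0 := by
  rw [mul_comm]; exact hrne x

/-- Euclidean Weingarten equation, explicit form: for holomorphic data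
`a, μ` with `μ ≠ 0`, the Gauss map `ν = (1/(1+|a|²))·(0, a+conj a, −i(a−conj a), −1+|a|²)`
satisfies `ν_w = ξ·conj(μ·W(a,−a))` with `ξ = a'/(conj μ (1+|a|²)²)`, and
`|ξ|² = |a'|²/(|μ|²(1+|a|²)⁴) = −K`, where `K = −(1/λ²)Δ ln λ` is the Gauss curvature of
the metric with `λ² = 4|μ|²(1+|a|²)²`; in particular `K = −|a'|²/(|μ|²(1+|a|²)⁴) ≤ 0`. -/
theorem stmt_5 (U : Set ℂ) (hU : IsOpen U) (a μ : ℂ → ℂ)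
    (ha : ∀ w ∈ U, DifferentiableAt ℂ a w) (hμ : ∀ w ∈ U, DifferentiableAt ℂ μ w)
    (hμ0 : ∀ w ∈ U, μ w ≠ 0)
    (ν : ℂ → Fin 4 → ℂ)
    (hν : ∀ w, ν w = ((1 : ℂ) / (1 + (‖a w‖ : ℂ) ^ 2)) •
      ![0, a w + conj (a w), -I * (a w - conj (a w)), -1 + (‖a w‖ : ℂ) ^ 2])
    (ξ : ℂ → ℂ)
    (hξ : ∀ w, ξ w = deriv a w / (conj (μ w) * (1 + (‖a w‖ : ℂ) ^ 2) ^ 2))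
    (lam : ℂ → ℝ)
    (hlam : ∀ w, lam w =
      Real.sqrt (4 * ‖μ w‖ ^ 2 * (1 + ‖a w‖ ^ 2) ^ 2))
    (K : ℂ → ℝ)
    (hK : ∀ w, K w = -(1 / (lam w) ^ 2) * lap (fun z => Real.log (lam z)) w) :
    ∀ w ∈ U,
      wd ν w = ξ w • (fun i => conj ((μ w • W (a w) (-(a w))) i)) ∧
      ‖ξ w‖ ^ 2 =
        ‖deriv a w‖ ^ 2 /
          (‖μ w‖ ^ 2 * (1 + ‖a w‖ ^ 2) ^ 4) ∧
      ‖ξ w‖ ^ 2 = -K w ∧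
      K w = -(‖deriv a w‖ ^ 2 /
          (‖μ w‖ ^ 2 * (1 + ‖a w‖ ^ 2) ^ 4)) ∧
      K w ≤ 0 := by

  intro w hw
  have hMne : μ w ≠ 0 := hμ0 w hw
  have hMcne : conj (μ w) ≠ 0 := by simpa using hMne
  -- derivative package at w
  have hA : HasFDerivAt a (lm (deriv a w) 0) w := LM.holo (ha w hw)
  have hC : HasFDerivAt (fun z => conj (a z)) (lm 0 (conj (deriv a w))) w :=
    LM.congr (LM.conj hA) (by simp) rfl
  have hρ := LM.add (LM.const 1 w) (LM.mul hA hC)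
  -- clean form of ν
  have hνe : ν = (fun z => ![(0 : ℂ),
      (a z + conj (a z)) / (1 + a z * conj (a z)),
      (-I * (a z - conj (a z))) / (1 + a z * conj (a z)),
      (-1 + a z * conj (a z)) / (1 + a z * conj (a z))]) := by
    funext z
    rw [hν z]
    funext i
    fin_cases i <;>
      simp [habs2, Matrix.cons_val_zero, Matrix.cons_val_one, Matrix.head_cons,
        smul_eq_mul, div_eq_inv_mul]
  -- componentwise derivatives
  have h1' := LM.div (LM.add hA hC) hρ (hrne (a w))
  have h2' := LM.div (LM.mul (LM.const (-I) w) (LM.sub hA hC)) hρ (hrne (a w))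
  have h3' := LM.div (LM.add (LM.const (-1) w) (LM.mul hA hC)) hρ (hrne (a w))
  have hXi : ‖ξ w‖ ^ 2 = ‖deriv a w‖ ^ 2 /
      (‖μ w‖ ^ 2 * (1 + ‖a w‖ ^ 2) ^ 4) := by
    rw [hξ w, norm_div, norm_mul, norm_pow, Complex.norm_conj]
    have habsr : ‖(1 : ℂ) + (‖a w‖ : ℂ) ^ 2‖
        = 1 + ‖a w‖ ^ 2 := by
      rw [show ((1 : ℂ) + (‖a w‖ : ℂ) ^ 2)
          = ((1 + ‖a w‖ ^ 2 : ℝ) : ℂ) by push_cast; ring,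
        Complex.norm_real, Real.norm_eq_abs]
      exact _root_.abs_of_nonneg (by positivity)
    rw [habsr, div_pow, mul_pow, ← pow_mul]
  -- the Laplacian / curvature computation
  have hKform : K w = -(‖deriv a w‖ ^ 2 /
      (‖μ w‖ ^ 2 * (1 + ‖a w‖ ^ 2) ^ 4)) := by
    -- analyticity: derivatives of a and μ are differentiable
    have hμon : DifferentiableOn ℂ μ U := fun z hz => (hμ z hz).differentiableWithinAt
    have haon : DifferentiableOn ℂ a U := fun z hz => (ha z hz).differentiableWithinAt
    have hμ'd : DifferentiableAt ℂ (deriv μ) w :=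
      (((hμon.analyticOnNhd hU).deriv) w hw).differentiableAt
    have ha'd : DifferentiableAt ℂ (deriv a) w :=
      (((haon.analyticOnNhd hU).deriv) w hw).differentiableAt
    -- data for the master lemma
    have hGcast : ∀ z : ℂ, 4 * (μ z * conj (μ z)) * ((1 + a z * conj (a z)) *
        (1 + a z * conj (a z)))
        = ((4 * ‖μ z‖ ^ 2 * (1 + ‖a z‖ ^ 2) ^ 2 : ℝ) : ℂ) := by
      intro z
      rw [← habs2, ← habs2]; push_cast; ring
    have hfF : ∀ z : ℂ, Real.log (lam z) =
        (((2⁻¹ : ℝ) : ℂ) * Complex.log (4 * (μ z * conj (μ z)) *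
          ((1 + a z * conj (a z)) * (1 + a z * conj (a z))))).re := by
      intro z
      rw [hlam z, Real.log_sqrt (by positivity), Complex.re_ofReal_mul, Complex.log_re,
        hGcast z, Complex.norm_real, Real.norm_eq_abs, _root_.abs_of_nonneg (by positivity)]
      ring
    have hFev : ∀ᶠ z in nhds w, HasFDerivAt
        (fun z => ((2⁻¹ : ℝ) : ℂ) * Complex.log (4 * (μ z * conj (μ z)) *
          ((1 + a z * conj (a z)) * (1 + a z * conj (a z)))))
        (lm ((fun z => deriv μ z / μ z / 2 + deriv a z * conj (a z) /
              (1 + a z * conj (a z))) z)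
            ((fun z => conj (deriv μ z / μ z / 2 + deriv a z * conj (a z) /
              (1 + a z * conj (a z)))) z)) z := by
      filter_upwards [hU.mem_nhds hw] with z hz
      have hμz : μ z ≠ 0 := hμ0 z hz
      have hμcz : conj (μ z) ≠ 0 := by simpa using hμz
      have hAz : HasFDerivAt a (lm (deriv a z) 0) z := LM.holo (ha z hz)
      have hMz : HasFDerivAt μ (lm (deriv μ z) 0) z := LM.holo (hμ z hz)
      have hCz : HasFDerivAt (fun y => conj (a y)) (lm 0 (conj (deriv a z))) z :=
        LM.congr (LM.conj hAz) (by simp) rfl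
      have hMCz : HasFDerivAt (fun y => conj (μ y)) (lm 0 (conj (deriv μ z))) z :=
        LM.congr (LM.conj hMz) (by simp) rfl
      have hρz := LM.add (LM.const 1 z) (LM.mul hAz hCz)
      have hG := LM.mul (LM.mul (LM.const 4 z) (LM.mul hMz hMCz)) (LM.mul hρz hρz)
      have hslit : (fun y => 4 * (μ y * conj (μ y)) * ((1 + a y * conj (a y)) *
          (1 + a y * conj (a y)))) z ∈ Complex.slitPlane := by
        show 4 * (μ z * conj (μ z)) * ((1 + a z * conj (a z)) * (1 + a z * conj (a z)))
          ∈ Complex.slitPlane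
        rw [hGcast z]
        rw [Complex.mem_slitPlane_iff]
        left
        simp only [Complex.ofReal_re]
        have : ‖μ z‖ ≠ 0 := norm_ne_zero_iff.mpr hμz
        positivity
      have hlog := LM.clog hG hslit
      have hF1 := LM.mul (LM.const (((2⁻¹ : ℝ) : ℂ)) z) hlog
      have hGne : 4 * (μ z * conj (μ z)) * ((1 + a z * conj (a z)) *
          (1 + a z * conj (a z))) ≠ 0 := by
        rw [hGcast z]
        have h1 : ‖μ z‖ ≠ 0 := norm_ne_zero_iff.mpr hμz
        exact Complex.ofReal_ne_zero.mpr (by positivity)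
      refine LM.congr hF1 ?_ ?_
      · rw [zero_mul, zero_add, ← mul_div_assoc, div_eq_iff hGne]
        field_simp [hμz, hrne (a z)]
        push_cast
        ring
      · simp only [map_add, map_div₀, map_mul, Complex.conj_conj, map_one, map_ofNat]
        rw [zero_mul, zero_add, ← mul_div_assoc, div_eq_iff hGne]
        field_simp [hμcz, hrne' (a z), hrne (a z)]
        push_cast
        ring
    -- derivative of P at w, with cleaned-up antiholomorphic coefficient
    have ht1 : HasFDerivAt (fun z => deriv μ z / μ z / 2)
        (lm (deriv (fun z => deriv μ z / μ z / 2) w) 0) w :=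
      LM.holo ((hμ'd.div (hμ w hw) hMne).div_const 2)
    have ht2 := LM.div (LM.mul (LM.holo ha'd) hC) hρ (hrne (a w))
    have hP0 := LM.add ht1 ht2
    have hQeq : (0 : ℂ) + ((0 * conj (a w) + deriv a w * conj (deriv a w)) *
          (1 + a w * conj (a w)) - deriv a w * conj (a w) *
          (0 + (0 * conj (a w) + a w * conj (deriv a w)))) / (1 + a w * conj (a w)) ^ 2
        = ((‖deriv a w‖ ^ 2 / (1 + ‖a w‖ ^ 2) ^ 2 : ℝ) : ℂ) := by
      rw [zero_add]
      have hnum : (0 * conj (a w) + deriv a w * conj (deriv a w)) *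
          (1 + a w * conj (a w)) - deriv a w * conj (a w) *
          (0 + (0 * conj (a w) + a w * conj (deriv a w)))
          = deriv a w * conj (deriv a w) := by ring
      rw [hnum, ← habs2, ← habs2]
      push_cast
      ring
    have hP' := LM.congr hP0 rfl hQeq
    have hQ' := LM.conj hP'
    have hlap := lap_master hfF hFev hP' hQ'
    have hlapval : lap (fun z => Real.log (lam z)) w
        = 4 * (‖deriv a w‖ ^ 2 / (1 + ‖a w‖ ^ 2) ^ 2) := by
      rw [hlap, Complex.conj_ofReal]
      rw [show ((2 : ℂ) * ((((‖deriv a w‖ ^ 2 /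
          (1 + ‖a w‖ ^ 2) ^ 2 : ℝ)) : ℂ) +
          (((‖deriv a w‖ ^ 2 / (1 + ‖a w‖ ^ 2) ^ 2 : ℝ)) : ℂ)))
          = (((4 * (‖deriv a w‖ ^ 2 / (1 + ‖a w‖ ^ 2) ^ 2) : ℝ)) : ℂ)
          by push_cast; ring]
      rw [Complex.ofReal_re]
    have hlam2 : lam w ^ 2 = 4 * ‖μ w‖ ^ 2 * (1 + ‖a w‖ ^ 2) ^ 2 := by
      rw [hlam w]
      exact Real.sq_sqrt (by positivity)
    rw [hK w, hlapval, hlam2]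
    have hμa : ‖μ w‖ ≠ 0 := norm_ne_zero_iff.mpr hMne
    have hra : (1 + ‖a w‖ ^ 2 : ℝ) ≠ 0 := by positivity
    field_simp
  refine ⟨?_, hXi, by rw [hKform, neg_neg]; exact hXi, hKform, ?_⟩
  · -- Weingarten equation
    rw [hνe]
    have hdiff : ∀ i, DifferentiableAt ℝ (fun z => (![(0 : ℂ),
        (a z + conj (a z)) / (1 + a z * conj (a z)),
        (-I * (a z - conj (a z))) / (1 + a z * conj (a z)),
        (-1 + a z * conj (a z)) / (1 + a z * conj (a z))] : Fin 4 → ℂ) i) w := by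
      intro i
      fin_cases i <;>
        simp only [Matrix.cons_val_zero, Matrix.cons_val_one, Matrix.head_cons,
          Matrix.cons_val_two, Matrix.cons_val_three, Matrix.tail_cons]
      · exact (differentiableAt_const _)
      · exact h1'.differentiableAt
      · exact h2'.differentiableAt
      · exact h3'.differentiableAt
    funext i
    rw [wd_pi hdiff i]
    have hRHS : ∀ i, (ξ w • (fun i => conj ((μ w • W (a w) (-(a w))) i))) i
        = ξ w * conj (μ w * W (a w) (-(a w)) i) := by
      intro i; simp [Pi.smul_apply, smul_eq_mul]
    fin_cases i <;>
      rw [hRHS] <;>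
      simp only [Matrix.cons_val_zero, Matrix.cons_val_one, Matrix.head_cons,
        Matrix.cons_val_two, Matrix.cons_val_three, Matrix.tail_cons, W, Fin.reduceFinMk, Matrix.cons_val]
    · refine (wd_eq (LM.const 0 w)).trans ?_
      simp
    · refine (wd_eq h1').trans ?_
      rw [hξ w]
      simp only [map_mul, map_add, map_sub, map_one, Complex.conj_conj, habs2, map_neg]
      field_simp [hMcne, hrne (a w)]
      ring
    · refine (wd_eq h2').trans ?_
      rw [hξ w]
      simp only [map_mul, map_add, map_sub, map_one, Complex.conj_conj, Complex.conj_I, habs2, map_neg]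
      field_simp [hMcne, hrne (a w)]
      ring
    · refine (wd_eq h3').trans ?_
      rw [hξ w]
      simp only [map_mul, map_add, map_sub, map_one, Complex.conj_conj, habs2, map_neg]
      field_simp [hMcne, hrne (a w)]
      ring
  · rw [hKform]
    have : (0 : ℝ) ≤ ‖deriv a w‖ ^ 2 /
        (‖μ w‖ ^ 2 * (1 + ‖a w‖ ^ 2) ^ 4) := by positivity
    linarith
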